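/- For every nonnegative integer k, there exists a P_4-free circulant that is not k-paired; that is, there exist a positive integer n and a set D ⊆ {1,…,n−1} with d ∈ D ⇔ n−d ∈ D such that the circulant C_n(D) contains no induced subgraph isomorphic to the path on four vertices, and there do not exist positive integers a_1,b_1,…,a_k,b_k with a_i·b_i ∣ n for all i ∈ [k] and D = ⋃_{i=1}^k { d ∈ {1,…,n−1} : a_i ∣ d and a_i·b_i ∤ d }. -/

import Mathlib

open SimpleGraph Finset

/-- The circulant graph `C_n(D)` on vertex set `ZMod n` with distance set
`D ⊆ {1, …, n-1}`: distinct vertices `i, j` are adjacent iff `(i - j) mod n ∈ D`. -/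
def circulant (n : ℕ) (D : Finset ℕ) : SimpleGraph (ZMod n) :=
  SimpleGraph.fromRel (fun i j => (i - j).val ∈ D)

/-- A graph is a CIS graph if every maximal clique and every maximal stable set
(equivalently, every maximal clique of the complement) intersect. -/
def SimpleGraph.IsCIS {V : Type*} (G : SimpleGraph V) : Prop :=
  ∀ C S : Set V, Maximal G.IsClique C → Maximal Gᶜ.IsClique S → (C ∩ S).Nonempty

/-- The distance set `{d ∈ {1,…,n-1} : a ∣ d ∧ a*b ∤ d}` of a pair `(a, b)`. -/
def pairedD (n a b : ℕ) : Finset ℕ :=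
  (Finset.Icc 1 (n - 1)).filter (fun d => a ∣ d ∧ ¬ (a * b) ∣ d)

/-- The `k`-paired circulant `C(n; a_1,b_1; …; a_k,b_k)` (index type `ι`). -/
def pairedCirculant (n : ℕ) {ι : Type*} [Fintype ι] (a b : ι → ℕ) : SimpleGraph (ZMod n) :=
  circulant n (Finset.univ.biUnion (fun i => pairedD n (a i) (b i)))

/-- The lexicographic product of two simple graphs. -/
def lexProd {α β : Type*} (G : SimpleGraph α) (H : SimpleGraph β) : SimpleGraph (α × β) where
  Adj p q := G.Adj p.1 q.1 ∨ (p.1 = q.1 ∧ H.Adj p.2 q.2)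
  symm := by
    constructor
    intro p q h
    rcases h with h | ⟨h1, h2⟩
    · exact Or.inl h.symm
    · exact Or.inr ⟨h1.symm, h2.symm⟩
  loopless := by
    constructor
    intro p h
    rcases h with h | ⟨_, h⟩
    · exact G.irrefl h
    · exact H.irrefl h


local notation "v2" => padicValNat 2

private lemma fact2 : Fact (Nat.Prime 2) := ⟨Nat.prime_two⟩

attribute [local instance] fact2

private lemma v2_lt {m d : ℕ} (h1 : d ≠ 0) (h2 : d < 2 ^ m) : v2 d < m := by
  have := Nat.le_of_dvd (Nat.pos_of_ne_zero h1) (pow_padicValNat_dvd (p := 2) (n := d))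
  exact (Nat.pow_lt_pow_iff_right one_lt_two).mp (lt_of_le_of_lt this h2)

private lemma v2_min_le_add {a b : ℕ} (ha : a ≠ 0) (hb : b ≠ 0) :
    min (v2 a) (v2 b) ≤ v2 (a + b) := by
  have h1 : (2:ℕ) ^ min (v2 a) (v2 b) ∣ a :=
    (padicValNat_dvd_iff_le ha).mpr (min_le_left _ _)
  have h2 : (2:ℕ) ^ min (v2 a) (v2 b) ∣ b :=
    (padicValNat_dvd_iff_le hb).mpr (min_le_right _ _)
  exact (padicValNat_dvd_iff_le (by omega)).mp (dvd_add h1 h2)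

private lemma v2_sub {a b : ℕ} (hb : b ≠ 0) (hlt2 : b < a) (hlt : v2 b < v2 a) :
    v2 (a - b) = v2 b := by
  have ha : a ≠ 0 := by omega
  have hab : a - b ≠ 0 := by omega
  have hdb : (2:ℕ) ^ v2 b ∣ b := pow_padicValNat_dvd
  have hda : (2:ℕ) ^ v2 b ∣ a := (padicValNat_dvd_iff_le ha).mpr hlt.le
  have hge : v2 b ≤ v2 (a - b) :=
    (padicValNat_dvd_iff_le hab).mp (Nat.dvd_sub hda hdb)
  rcases eq_or_lt_of_le hge with h | h
  · exact h.symm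
  · exfalso
    have h1 : (2:ℕ) ^ (v2 b + 1) ∣ a - b := (padicValNat_dvd_iff_le hab).mpr h
    have h2 : (2:ℕ) ^ (v2 b + 1) ∣ a := (padicValNat_dvd_iff_le ha).mpr hlt
    have h3 : (2:ℕ) ^ (v2 b + 1) ∣ b := by
      have := Nat.dvd_sub h2 h1
      rwa [Nat.sub_sub_self hlt2.le] at this
    exact pow_succ_padicValNat_not_dvd hb h3

private lemma v2_add_left {a b : ℕ} (ha : a ≠ 0) (hb : b ≠ 0) (hlt : v2 a < v2 b) :
    v2 (a + b) = v2 a := by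
  have hab : a + b ≠ 0 := by omega
  have hge : v2 a ≤ v2 (a + b) := by
    have := v2_min_le_add ha hb; omega
  rcases eq_or_lt_of_le hge with h | h
  · exact h.symm
  · exfalso
    have h1 : (2:ℕ) ^ (v2 a + 1) ∣ a + b := (padicValNat_dvd_iff_le hab).mpr h
    have h2 : (2:ℕ) ^ (v2 a + 1) ∣ b := (padicValNat_dvd_iff_le hb).mpr hlt
    have h3 : (2:ℕ) ^ (v2 a + 1) ∣ a := by
      have := Nat.dvd_sub h1 h2
      rwa [Nat.add_sub_cancel] at this
    exact pow_succ_padicValNat_not_dvd ha h3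

section ZModLemmas

variable {m : ℕ}

private lemma neZero_pow : NeZero (2 ^ m) := ⟨(Nat.pow_pos (n := m) two_pos).ne'⟩

attribute [local instance] neZero_pow

/-- valuation of an element of `ZMod (2^m)`. -/
private def w (x : ZMod (2 ^ m)) : ℕ := v2 x.val

private lemma val_ne_zero {x : ZMod (2 ^ m)} (hx : x ≠ 0) : x.val ≠ 0 :=
  fun h => hx ((ZMod.val_eq_zero x).mp h)

private lemma w_lt {x : ZMod (2 ^ m)} (hx : x ≠ 0) : w x < m :=
  v2_lt (val_ne_zero hx) (ZMod.val_lt x)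

private lemma w_neg {x : ZMod (2 ^ m)} (hx : x ≠ 0) : w (-x) = w x := by
  unfold w
  rw [ZMod.neg_val, if_neg hx]
  exact v2_sub (val_ne_zero hx) (ZMod.val_lt x)
    (by rw [padicValNat.prime_pow]; exact w_lt hx)

private lemma w_min_le {x y : ZMod (2 ^ m)} (hx : x ≠ 0) (hy : y ≠ 0) (hxy : x + y ≠ 0) :
    min (w x) (w y) ≤ w (x + y) := by
  have hvx := val_ne_zero hx
  have hvy := val_ne_zero hy
  have hsum : (x + y).val = (x.val + y.val) % 2 ^ m := ZMod.val_add x y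
  rcases lt_or_ge (x.val + y.val) (2 ^ m) with h | h
  · simp only [w]; rw [hsum, Nat.mod_eq_of_lt h]
    exact v2_min_le_add hvx hvy
  · have hlt : x.val + y.val - 2 ^ m < 2 ^ m := by
      have := ZMod.val_lt x; have := ZMod.val_lt y; omega
    have hmod : (x.val + y.val) % 2 ^ m = x.val + y.val - 2 ^ m := by
      rw [Nat.mod_eq_sub_mod h, Nat.mod_eq_of_lt hlt]
    simp only [w]; rw [hsum, hmod]
    have hne : x.val + y.val - 2 ^ m ≠ 0 := by
      intro h0
      apply val_ne_zero hxy
      rw [hsum, hmod, h0]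
    set t := min (w x) (w y) with ht
    have htm : t ≤ m := le_of_lt (lt_of_le_of_lt (min_le_left _ _) (w_lt hx))
    have h1 : (2:ℕ) ^ t ∣ x.val := (padicValNat_dvd_iff_le hvx).mpr (min_le_left _ _)
    have h2 : (2:ℕ) ^ t ∣ y.val := (padicValNat_dvd_iff_le hvy).mpr (min_le_right _ _)
    have h3 : (2:ℕ) ^ t ∣ 2 ^ m := pow_dvd_pow 2 htm
    exact (padicValNat_dvd_iff_le hne).mp (Nat.dvd_sub (dvd_add h1 h2) h3)

private lemma w_add_eq {x y : ZMod (2 ^ m)} (hx : x ≠ 0) (hy : y ≠ 0) (hlt : w x < w y) :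
    w (x + y) = w x := by
  have hxy : x + y ≠ 0 := by
    intro h
    have : x = -y := by linear_combination h
    rw [this, w_neg hy] at hlt
    exact lt_irrefl _ hlt
  have hge : w x ≤ w (x + y) := by
    have := w_min_le hx hy hxy; omega
  rcases eq_or_lt_of_le hge with h | h
  · exact h.symm
  · exfalso
    have hny : (-y : ZMod (2 ^ m)) ≠ 0 := neg_ne_zero.mpr hy
    have := w_min_le hxy hny (by rw [add_neg_cancel_right]; exact hx)
    rw [add_neg_cancel_right, w_neg hy] at this
    omega

end ZModLemmas

attribute [local instance] neZero_pow

private def Dset (m : ℕ) : Finset ℕ :=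
  (Finset.Icc 1 (2 ^ m - 1)).filter (fun d => Even (v2 d))

private lemma mem_Dset {m d : ℕ} :
    d ∈ Dset m ↔ (1 ≤ d ∧ d ≤ 2 ^ m - 1) ∧ Even (v2 d) := by
  simp [Dset, Finset.mem_filter, Finset.mem_Icc, and_assoc]

private lemma val_mem_Dset {m : ℕ} {z : ZMod (2 ^ m)} (hz : z ≠ 0) :
    z.val ∈ Dset m ↔ Even (w z) := by
  have h1 : 1 ≤ z.val := Nat.pos_of_ne_zero (val_ne_zero hz)
  have h2 : z.val < 2 ^ m := ZMod.val_lt z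
  rw [mem_Dset]
  exact ⟨fun h => h.2, fun h => ⟨⟨h1, by omega⟩, h⟩⟩

private lemma adj_iff {m : ℕ} {x y : ZMod (2 ^ m)} :
    (circulant (2 ^ m) (Dset m)).Adj x y ↔ x ≠ y ∧ Even (w (x - y)) := by
  show (SimpleGraph.fromRel _).Adj x y ↔ _
  rw [SimpleGraph.fromRel_adj]
  constructor
  · rintro ⟨hne, h | h⟩
    · exact ⟨hne, (val_mem_Dset (sub_ne_zero.mpr hne)).mp h⟩
    · have hz : y - x ≠ 0 := sub_ne_zero.mpr (Ne.symm hne)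
      have h' := (val_mem_Dset hz).mp h
      rw [show y - x = -(x - y) by ring, w_neg (sub_ne_zero.mpr hne)] at h'
      exact ⟨hne, h'⟩
  · rintro ⟨hne, h⟩
    exact ⟨hne, Or.inl ((val_mem_Dset (sub_ne_zero.mpr hne)).mpr h)⟩

private lemma p4free (m : ℕ) :
    IsEmpty (SimpleGraph.pathGraph 4 ↪g circulant (2 ^ m) (Dset m)) := by
  constructor
  intro f
  have hmap : ∀ u v : Fin 4, (circulant (2 ^ m) (Dset m)).Adj (f u) (f v) ↔
      (SimpleGraph.pathGraph 4).Adj u v := fun u v => f.map_adj_iff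
  have h01 := adj_iff.mp ((hmap 0 1).mpr (by rw [pathGraph_adj]; decide))
  have h12 := adj_iff.mp ((hmap 1 2).mpr (by rw [pathGraph_adj]; decide))
  have h23 := adj_iff.mp ((hmap 2 3).mpr (by rw [pathGraph_adj]; decide))
  have hne02 : f 0 ≠ f 2 := fun h => absurd (f.injective h) (by decide)
  have hne13 : f 1 ≠ f 3 := fun h => absurd (f.injective h) (by decide)
  have hne03 : f 0 ≠ f 3 := fun h => absurd (f.injective h) (by decide)
  have hnadj02 : ¬ Even (w (f 0 - f 2)) := fun he =>
    (by rw [pathGraph_adj]; decide : ¬ (SimpleGraph.pathGraph 4).Adj 0 2)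
      ((hmap 0 2).mp (adj_iff.mpr ⟨hne02, he⟩))
  have hnadj13 : ¬ Even (w (f 1 - f 3)) := fun he =>
    (by rw [pathGraph_adj]; decide : ¬ (SimpleGraph.pathGraph 4).Adj 1 3)
      ((hmap 1 3).mp (adj_iff.mpr ⟨hne13, he⟩))
  have hnadj03 : ¬ Even (w (f 0 - f 3)) := fun he =>
    (by rw [pathGraph_adj]; decide : ¬ (SimpleGraph.pathGraph 4).Adj 0 3)
      ((hmap 0 3).mp (adj_iff.mpr ⟨hne03, he⟩))
  have hu : f 0 - f 1 ≠ 0 := sub_ne_zero.mpr h01.1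
  have hv : f 1 - f 2 ≠ 0 := sub_ne_zero.mpr h12.1
  have ht : f 2 - f 3 ≠ 0 := sub_ne_zero.mpr h23.1
  have e02 : (f 0 - f 1) + (f 1 - f 2) = f 0 - f 2 := by ring
  have e13 : (f 1 - f 2) + (f 2 - f 3) = f 1 - f 3 := by ring
  have e03 : (f 2 - f 3) + (f 0 - f 2) = f 0 - f 3 := by ring
  have hs02 : (f 0 - f 1) + (f 1 - f 2) ≠ 0 := by rw [e02]; exact sub_ne_zero.mpr hne02
  have hs13 : (f 1 - f 2) + (f 2 - f 3) ≠ 0 := by rw [e13]; exact sub_ne_zero.mpr hne13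
  have hab : w (f 0 - f 1) = w (f 1 - f 2) := by
    rcases lt_trichotomy (w (f 0 - f 1)) (w (f 1 - f 2)) with h | h | h
    · exact absurd (by rw [← e02, w_add_eq hu hv h]; exact h01.2) hnadj02
    · exact h
    · exact absurd (by rw [← e02, add_comm, w_add_eq hv hu h]; exact h12.2) hnadj02
  have hbc : w (f 1 - f 2) = w (f 2 - f 3) := by
    rcases lt_trichotomy (w (f 1 - f 2)) (w (f 2 - f 3)) with h | h | h
    · exact absurd (by rw [← e13, w_add_eq hv ht h]; exact h12.2) hnadj13
    · exact h
    · exact absurd (by rw [← e13, add_comm, w_add_eq ht hv h]; exact h23.2) hnadj13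
  have hgt : w (f 2 - f 3) < w (f 0 - f 2) := by
    have hmin := w_min_le hu hv hs02
    rw [e02, hab, min_self] at hmin
    rcases eq_or_lt_of_le hmin with h | h
    · exact absurd (by rw [← h]; exact h12.2) hnadj02
    · omega
  have hfin : w ((f 2 - f 3) + (f 0 - f 2)) = w (f 2 - f 3) :=
    w_add_eq ht (sub_ne_zero.mpr hne02) hgt
  rw [e03] at hfin
  exact hnadj03 (by rw [hfin]; exact h23.2)

private lemma two_pow_one_le (m : ℕ) : 1 ≤ 2 ^ m := Nat.one_le_two_pow

private lemma not_paired (k : ℕ) :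
    ¬ ∃ a b : Fin k → ℕ, (∀ i, 0 < a i) ∧ (∀ i, 0 < b i) ∧
        (∀ i, a i * b i ∣ 2 ^ (2 * k + 2)) ∧
        Dset (2 * k + 2) =
          Finset.univ.biUnion (fun i => pairedD (2 ^ (2 * k + 2)) (a i) (b i)) := by
  rintro ⟨a, b, -, -, -, hD⟩
  have hmem : ∀ j : Fin (k + 1), (2 : ℕ) ^ (2 * j.val) ∈
      Finset.univ.biUnion (fun i => pairedD (2 ^ (2 * k + 2)) (a i) (b i)) := by
    intro j
    rw [← hD, mem_Dset]
    have hj : 2 * j.val < 2 * k + 2 := by have := j.isLt; omega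
    have hlt : (2 : ℕ) ^ (2 * j.val) < 2 ^ (2 * k + 2) :=
      Nat.pow_lt_pow_right one_lt_two hj
    exact ⟨⟨two_pow_one_le _, by omega⟩, by rw [padicValNat.prime_pow]; exact even_two_mul _⟩
  choose g hg1 hg2 using fun j => Finset.mem_biUnion.mp (hmem j)
  obtain ⟨j, l, hne, heq⟩ := Fintype.exists_ne_map_eq_of_card_lt g (by simp)
  have key : ∀ j l : Fin (k + 1), j.val < l.val → g j = g l → False := by
    intro j l hjl hgl
    obtain ⟨hr_j, hA_j, hAB_j⟩ := Finset.mem_filter.mp (hg2 j)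
    have hl2 := hg2 l
    rw [← hgl] at hl2
    obtain ⟨hr_l, hA_l, hAB_l⟩ := Finset.mem_filter.mp hl2
    have hAB : a (g j) * b (g j) ∣ 2 ^ (2 * j.val + 1) := by
      by_contra hc
      have hj' : 2 * j.val + 1 < 2 * k + 2 := by have := l.isLt; omega
      have hlt : (2 : ℕ) ^ (2 * j.val + 1) < 2 ^ (2 * k + 2) :=
        Nat.pow_lt_pow_right one_lt_two hj'
      have hrange : (2 : ℕ) ^ (2 * j.val + 1) ∈ Finset.Icc 1 (2 ^ (2 * k + 2) - 1) :=
        Finset.mem_Icc.mpr ⟨two_pow_one_le _, by omega⟩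
      have hmem' : (2 : ℕ) ^ (2 * j.val + 1) ∈ pairedD (2 ^ (2 * k + 2)) (a (g j)) (b (g j)) :=
        Finset.mem_filter.mpr ⟨hrange, dvd_trans hA_j (pow_dvd_pow 2 (Nat.le_succ _)), hc⟩
      have hmem'' : (2 : ℕ) ^ (2 * j.val + 1) ∈ Dset (2 * k + 2) := by
        rw [hD]; exact Finset.mem_biUnion.mpr ⟨g j, Finset.mem_univ _, hmem'⟩
      have hev := (mem_Dset.mp hmem'').2
      rw [padicValNat.prime_pow] at hev
      exact Nat.even_add_one.mp hev (even_two_mul _)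
    exact hAB_l (dvd_trans hAB (pow_dvd_pow 2 (by omega : 2 * j.val + 1 ≤ 2 * l.val)))
  have hvne : j.val ≠ l.val := fun h' => hne (Fin.ext h')
  rcases Nat.lt_or_ge j.val l.val with h | h
  · exact key j l h heq
  · exact key l j (by omega) heq.symm


/-- For every `k` there is a `P₄`-free circulant that is not `k`-paired. -/
theorem stmt_19 (k : ℕ) :
    ∃ (n : ℕ) (D : Finset ℕ), 0 < n ∧ D ⊆ Finset.Icc 1 (n - 1) ∧ (∀ d ∈ D, n - d ∈ D) ∧
      IsEmpty (SimpleGraph.pathGraph 4 ↪g circulant n D) ∧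
      ¬ ∃ a b : Fin k → ℕ, (∀ i, 0 < a i) ∧ (∀ i, 0 < b i) ∧ (∀ i, a i * b i ∣ n) ∧
          D = Finset.univ.biUnion (fun i => pairedD n (a i) (b i)) := by
  refine ⟨2 ^ (2 * k + 2), Dset (2 * k + 2), Nat.pow_pos two_pos,
    Finset.filter_subset _ _, ?_, p4free _, not_paired k⟩
  intro d hd
  obtain ⟨⟨h1, h2⟩, he⟩ := mem_Dset.mp hd
  have hp : 1 ≤ 2 ^ (2 * k + 2) := two_pow_one_le _
  rw [mem_Dset]
  refine ⟨⟨by omega, by omega⟩, ?_⟩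
  rw [v2_sub (by omega) (by omega)
    (by rw [padicValNat.prime_pow]; exact v2_lt (by omega) (by omega))]
  exact he
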